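/- Let s > 0, r > 0, α > 1+2r, γ > 0, and suppose 1/2 ≤ β ≤ 2 where β = log α / (log α - log(1+2r) + r(1+r)/(6(1+2r))). Let h be the piecewise function on [(1+r/6)s, α(1+r/6)s] defined by: h(t) = 0 on [(1+r/6)s, (1+11r/6)s]; h(t) = 6γβ·(t-(1+11r/6)s)/((1+2r)·r·s²) on [(1+11r/6)s, (1+2r)s]; h(t) = γβ/t on [(1+2r)s, αs]; h(t) = 6γβ·(α(1+r/6)s - t)/(α²·r·s²) on [αs, α(1+r/6)s]. Then: (i) 0 ≤ h(t) ≤ 2(1+r/6)γ/t for every t in the interval; (ii) if g is positive on the interval with g'/g = h and g((1+r/6)s) = ((1+r/6)s)^γ, then α^{-γ}·t^γ ≤ g(t) ≤ α^γ·t^γ for every t in the interval. -/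

import Mathlib

open Real

/-- The piecewise logarithmic derivative `h = g'/g` of the warping function `g` on one
period `[(1+r/6)s, α(1+r/6)s]` of the construction. -/
noncomputable def hpiece (s r α γ β : ℝ) : ℝ → ℝ := fun t =>
  if t ≤ (1 + 11*r/6) * s then 0
  else if t ≤ (1 + 2*r) * s then
    6*γ*β * (t - (1 + 11*r/6) * s) / ((1 + 2*r) * r * s^2)
  else if t ≤ α * s then γ*β / t
  else 6*γ*β * (α * (1 + r/6) * s - t) / (α^2 * r * s^2)

open Set Topology Filter

/-- Second branch of the antiderivative. -/
noncomputable def S6f2 (s r γ β : ℝ) : ℝ → ℝ := fun x =>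
  6*γ*β * (x - (1 + 11*r/6) * s)^2 / (2 * ((1 + 2*r) * r * s^2))

/-- Third branch of the antiderivative. -/
noncomputable def S6f3 (s r γ β : ℝ) : ℝ → ℝ := fun x =>
  γ*β * Real.log x + (γ*β * (r*(1+r)/(6*(1+2*r)) - r/12) - γ*β * Real.log ((1+2*r)*s))

/-- Fourth branch of the antiderivative. -/
noncomputable def S6f4 (s r α γ β : ℝ) : ℝ → ℝ := fun x =>
  γ*β * Real.log (α*s) + (γ*β * (r*(1+r)/(6*(1+2*r)) - r/12) - γ*β * Real.log ((1+2*r)*s)) + γ*β*(r/12)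
    - 6*γ*β * (α * (1 + r/6) * s - x)^2 / (2 * (α^2 * r * s^2))

/-- Piecewise antiderivative of `hpiece`. -/
noncomputable def Hpiece (s r α γ β : ℝ) : ℝ → ℝ := fun t =>
  if t ≤ (1 + 11*r/6) * s then 0
  else if t ≤ (1 + 2*r) * s then S6f2 s r γ β t
  else if t ≤ α * s then S6f3 s r γ β t
  else S6f4 s r α γ β t

lemma S6glue1 {f φ : ℝ → ℝ} {u v t d : ℝ} (hu : u < t) (hv : t < v)
    (hφ : HasDerivAt φ d t) (he : ∀ x, u < x → x < v → f x = φ x) : HasDerivAt f d t :=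
  hφ.congr_of_eventuallyEq (by
    filter_upwards [Ioo_mem_nhds hu hv] with x hx
    exact he x hx.1 hx.2)

lemma S6glue2 {f f1 f2 : ℝ → ℝ} {t0 d u v : ℝ} (hu : u < t0) (hv : t0 < v)
    (h1 : HasDerivAt f1 d t0) (h2 : HasDerivAt f2 d t0)
    (e1 : ∀ x, u < x → x ≤ t0 → f x = f1 x) (e2 : ∀ x, t0 ≤ x → x < v → f x = f2 x) :
    HasDerivAt f d t0 := by
  have hL : HasDerivWithinAt f d (Iic t0) t0 := by
    refine h1.hasDerivWithinAt.congr_of_eventuallyEq ?_ (e1 t0 hu le_rfl)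
    filter_upwards [self_mem_nhdsWithin,
      ((eventually_gt_nhds hu).filter_mono nhdsWithin_le_nhds : ∀ᶠ x in 𝓝[Iic t0] t0, u < x)]
      with x hx hx2
    exact e1 x hx2 hx
  have hR : HasDerivWithinAt f d (Ici t0) t0 := by
    refine h2.hasDerivWithinAt.congr_of_eventuallyEq ?_ (e2 t0 le_rfl hv)
    filter_upwards [self_mem_nhdsWithin,
      ((eventually_lt_nhds hv).filter_mono nhdsWithin_le_nhds : ∀ᶠ x in 𝓝[Ici t0] t0, x < v)]
      with x hx hx2
    exact e2 x hx hx2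
  have := hL.union hR
  rw [Iic_union_Ici] at this
  exact hasDerivWithinAt_univ.mp this

lemma S6f2_deriv {s r γ β : ℝ} (hr : 0 < r) (hs : 0 < s) (h2r : (0:ℝ) < 1 + 2*r) (x : ℝ) :
    HasDerivAt (S6f2 s r γ β)
      (6*γ*β * (x - (1 + 11*r/6) * s) / ((1 + 2*r) * r * s^2)) x := by
  have h := ((((hasDerivAt_id x).sub_const ((1 + 11*r/6) * s)).pow 2).const_mul
    (6*γ*β)).div_const (2 * ((1 + 2*r) * r * s^2))
  have hden : ((1 + 2*r) * r * s^2) ≠ 0 := by positivity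
  unfold S6f2
  refine h.congr_deriv ?_
  simp only [id_eq]
  field_simp
  ring

lemma S6f3_deriv {s r γ β : ℝ} {x : ℝ} (hx : x ≠ 0) :
    HasDerivAt (S6f3 s r γ β) (γ*β / x) x := by
  have h := ((Real.hasDerivAt_log hx).const_mul (γ*β)).add_const
    (γ*β * (r*(1+r)/(6*(1+2*r)) - r/12) - γ*β * Real.log ((1+2*r)*s))
  unfold S6f3
  exact h.congr_deriv (div_eq_mul_inv _ _).symm

lemma S6f4_deriv {s r α γ β : ℝ} (hr : 0 < r) (hs : 0 < s) (hαp : (0:ℝ) < α) (x : ℝ) :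
    HasDerivAt (S6f4 s r α γ β)
      (6*γ*β * (α * (1 + r/6) * s - x) / (α^2 * r * s^2)) x := by
  have h0 : HasDerivAt (fun y : ℝ => α * (1 + r/6) * s - y) (-1) x :=
    (hasDerivAt_id x).const_sub _
  have h := (((h0.pow 2).const_mul (6*γ*β)).div_const (2 * (α^2 * r * s^2))).const_sub
    (γ*β * Real.log (α*s) + (γ*β * (r*(1+r)/(6*(1+2*r)) - r/12) - γ*β * Real.log ((1+2*r)*s)) + γ*β*(r/12))
  have hden : (α^2 * r * s^2) ≠ 0 := by positivity
  unfold S6f4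
  refine h.congr_deriv ?_
  field_simp
  ring

lemma Hpiece_hasDerivAt {s r α γ β : ℝ} (hs : 0 < s) (hr : 0 < r) (hα : 1 + 2*r < α)
    {t : ℝ} (ht : t ∈ Set.Icc ((1 + r/6) * s) (α * (1 + r/6) * s)) :
    HasDerivAt (Hpiece s r α γ β) (hpiece s r α γ β t) t := by
  have h2r : (0:ℝ) < 1 + 2*r := by linarith
  have hαp : (0:ℝ) < α := by linarith
  have h01 : (1 + r/6) * s < (1 + 11*r/6) * s := by nlinarith
  have h12 : (1 + 11*r/6) * s < (1 + 2*r) * s := by nlinarith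
  have h23 : (1 + 2*r) * s < α * s := by nlinarith
  have h3b : α * s < α * (1 + r/6) * s := by nlinarith
  have hden2 : ((0:ℝ)) < (1 + 2*r) * r * s^2 := by positivity
  have hden4 : ((0:ℝ)) < α^2 * r * s^2 := by positivity
  have E1 : ∀ x : ℝ, x ≤ (1 + 11*r/6) * s → Hpiece s r α γ β x = 0 := by
    intro x hx; unfold Hpiece; rw [if_pos hx]
  have E2 : ∀ x : ℝ, (1 + 11*r/6) * s < x → x ≤ (1 + 2*r) * s →
      Hpiece s r α γ β x = S6f2 s r γ β x := by
    intro x h1 h2; unfold Hpiece; rw [if_neg (not_le.2 h1), if_pos h2]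
  have E3 : ∀ x : ℝ, (1 + 2*r) * s < x → x ≤ α * s →
      Hpiece s r α γ β x = S6f3 s r γ β x := by
    intro x h1 h2; unfold Hpiece
    rw [if_neg (not_le.2 (lt_trans h12 h1)), if_neg (not_le.2 h1), if_pos h2]
  have E4 : ∀ x : ℝ, α * s < x → Hpiece s r α γ β x = S6f4 s r α γ β x := by
    intro x h1; unfold Hpiece
    rw [if_neg (not_le.2 (lt_trans h12 (lt_trans h23 h1))),
      if_neg (not_le.2 (lt_trans h23 h1)), if_neg (not_le.2 h1)]
  have C12 : S6f2 s r γ β ((1 + 11*r/6) * s) = 0 := by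
    unfold S6f2; rw [sub_self]; ring
  have C23 : S6f2 s r γ β ((1 + 2*r) * s) = S6f3 s r γ β ((1 + 2*r) * s) := by
    unfold S6f2 S6f3; field_simp; ring
  have C34 : S6f3 s r γ β (α * s) = S6f4 s r α γ β (α * s) := by
    unfold S6f3 S6f4; field_simp; ring
  rcases le_or_gt t ((1 + 11*r/6) * s) with h1 | h1
  · have hval : hpiece s r α γ β t = 0 := by unfold hpiece; rw [if_pos h1]
    rw [hval]
    rcases eq_or_lt_of_le h1 with rfl | h1'
    · -- t = a1 : glue constant 0 with S6f2
      have hf2z : HasDerivAt (S6f2 s r γ β) 0 ((1 + 11*r/6) * s) := by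
        have h2 := S6f2_deriv (γ := γ) (β := β) hr hs h2r ((1 + 11*r/6) * s)
        rw [sub_self] at h2
        simpa using h2
      refine S6glue2 h01 h12 (hasDerivAt_const _ (0:ℝ)) hf2z
        (fun x _ hx => E1 x hx) ?_
      intro x hx1 hx2
      rcases eq_or_lt_of_le hx1 with rfl | hx1'
      · rw [E1 _ le_rfl, C12]
      · exact E2 x hx1' hx2.le
    · -- t < a1
      refine S6glue1 (show t - 1 < t by linarith) h1' (hasDerivAt_const _ (0:ℝ)) ?_
      intro x _ hx; exact E1 x hx.le
  · rcases le_or_gt t ((1 + 2*r) * s) with h2 | h2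
    · have hval : hpiece s r α γ β t =
          6*γ*β * (t - (1 + 11*r/6) * s) / ((1 + 2*r) * r * s^2) := by
        unfold hpiece; rw [if_neg (not_le.2 h1), if_pos h2]
      rw [hval]
      rcases eq_or_lt_of_le h2 with rfl | h2'
      · -- t = a2 : glue S6f2 with S6f3
        have hf3d : HasDerivAt (S6f3 s r γ β)
            (6*γ*β * ((1 + 2*r) * s - (1 + 11*r/6) * s) / ((1 + 2*r) * r * s^2))
            ((1 + 2*r) * s) := by
          have h3 := S6f3_deriv (s := s) (r := r) (γ := γ) (β := β)
            (show (1 + 2*r) * s ≠ 0 by positivity)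
          have heq : γ*β / ((1 + 2*r) * s) =
              6*γ*β * ((1 + 2*r) * s - (1 + 11*r/6) * s) / ((1 + 2*r) * r * s^2) := by
            field_simp; ring
          rwa [heq] at h3
        refine S6glue2 h12 h23 (S6f2_deriv hr hs h2r _) hf3d
          (fun x hx1 hx2 => E2 x hx1 hx2) ?_
        intro x hx1 hx2
        rcases eq_or_lt_of_le hx1 with rfl | hx1'
        · rw [E2 _ h12 le_rfl, C23]
        · exact E3 x hx1' hx2.le
      · -- a1 < t < a2
        refine S6glue1 h1 h2' (S6f2_deriv hr hs h2r t) ?_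
        intro x hx1 hx2; exact E2 x hx1 hx2.le
    · rcases le_or_gt t (α * s) with h3 | h3
      · have hval : hpiece s r α γ β t = γ*β / t := by
          unfold hpiece
          rw [if_neg (not_le.2 (lt_trans h12 h2)), if_neg (not_le.2 h2), if_pos h3]
        rw [hval]
        have ht0 : (0:ℝ) < t := lt_trans (by positivity) h2
        rcases eq_or_lt_of_le h3 with rfl | h3'
        · -- t = a3 : glue S6f3 with S6f4
          have hf4d : HasDerivAt (S6f4 s r α γ β) (γ*β / (α * s)) (α * s) := by
            have h4 := S6f4_deriv (s := s) (γ := γ) (β := β) hr hs hαp (α * s)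
            have heq : 6*γ*β * (α * (1 + r/6) * s - α * s) / (α^2 * r * s^2) =
                γ*β / (α * s) := by
              field_simp; ring
            rwa [heq] at h4
          refine S6glue2 h23 h3b (S6f3_deriv (by positivity)) hf4d
            (fun x hx1 hx2 => E3 x hx1 hx2) ?_
          intro x hx1 hx2
          rcases eq_or_lt_of_le hx1 with rfl | hx1'
          · rw [E3 _ h23 le_rfl, C34]
          · exact E4 x hx1'
        · -- a2 < t < a3
          refine S6glue1 h2 h3' (S6f3_deriv (s := s) (r := r) ht0.ne') ?_
          intro x hx1 hx2; exact E3 x hx1 hx2.le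
      · -- a3 < t
        have hval : hpiece s r α γ β t =
            6*γ*β * (α * (1 + r/6) * s - t) / (α^2 * r * s^2) := by
          unfold hpiece
          rw [if_neg (not_le.2 (lt_trans h12 (lt_trans h23 h3))),
            if_neg (not_le.2 (lt_trans h23 h3)), if_neg (not_le.2 h3)]
        rw [hval]
        refine S6glue1 h3 (show t < t + 1 by linarith) (S6f4_deriv hr hs hαp t) ?_
        intro x hx1 _; exact E4 x hx1

lemma Hpiece_left {s r α γ β : ℝ} (hs : 0 < s) (hr : 0 < r) :
    Hpiece s r α γ β ((1 + r/6) * s) = 0 := by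
  unfold Hpiece
  rw [if_pos (by nlinarith : (1 + r/6) * s ≤ (1 + 11*r/6) * s)]

lemma Hpiece_right {s r α γ β : ℝ} (hs : 0 < s) (hr : 0 < r) (hα : 1 + 2*r < α)
    (hβD : β * (Real.log α - Real.log (1 + 2*r) + r * (1 + r) / (6 * (1 + 2*r))) =
      Real.log α) :
    Hpiece s r α γ β (α * (1 + r/6) * s) = γ * Real.log α := by
  have h2r : (0:ℝ) < 1 + 2*r := by linarith
  have hαp : (0:ℝ) < α := by linarith
  have hb1 : ¬ (α * (1 + r/6) * s ≤ (1 + 11*r/6) * s) := by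
    push_neg
    nlinarith [mul_pos (sub_pos.2 hα) hs, mul_pos (mul_pos (sub_pos.2 hα) hr) hs,
      mul_pos (mul_pos hr hr) hs, mul_pos hr hs]
  have hb2 : ¬ (α * (1 + r/6) * s ≤ (1 + 2*r) * s) := by
    push_neg
    nlinarith [mul_pos (sub_pos.2 hα) hs, mul_pos (mul_pos hαp hr) hs]
  have hb3 : ¬ (α * (1 + r/6) * s ≤ α * s) := by
    push_neg
    nlinarith [mul_pos (mul_pos hαp hr) hs]
  unfold Hpiece
  rw [if_neg hb1, if_neg hb2, if_neg hb3]
  unfold S6f4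
  rw [Real.log_mul hαp.ne' hs.ne', Real.log_mul h2r.ne' hs.ne']
  have hαs : (α^2 * r * s^2) ≠ 0 := by positivity
  linear_combination γ * hβD

set_option maxHeartbeats 1000000 in
/-- (i) `0 ≤ h(t) ≤ 2(1+r/6)γ/t` on the period, and (ii) a positive `g` with
`g'/g = h` and `g((1+r/6)s) = ((1+r/6)s)^γ` satisfies `α^{-γ} t^γ ≤ g(t) ≤ α^γ t^γ`
throughout the period. -/
theorem statement_6 (s r α γ β : ℝ)
    (hs : 0 < s) (hr : 0 < r) (hα : α > 1 + 2*r) (hγ : 0 < γ)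
    (hβ : β = Real.log α /
      (Real.log α - Real.log (1 + 2*r) + r * (1 + r) / (6 * (1 + 2*r))))
    (hβ₁ : 1/2 ≤ β) (hβ₂ : β ≤ 2) :
    (∀ t ∈ Set.Icc ((1 + r/6) * s) (α * (1 + r/6) * s),
      0 ≤ hpiece s r α γ β t ∧ hpiece s r α γ β t ≤ 2 * (1 + r/6) * γ / t) ∧
    ∀ g : ℝ → ℝ,
      (∀ t ∈ Set.Icc ((1 + r/6) * s) (α * (1 + r/6) * s), 0 < g t) →
      (∀ t ∈ Set.Icc ((1 + r/6) * s) (α * (1 + r/6) * s),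
        HasDerivAt g (hpiece s r α γ β t * g t) t) →
      g ((1 + r/6) * s) = ((1 + r/6) * s) ^ γ →
      ∀ t ∈ Set.Icc ((1 + r/6) * s) (α * (1 + r/6) * s),
        α ^ (-γ) * t ^ γ ≤ g t ∧ g t ≤ α ^ γ * t ^ γ := by
  have h2r : (0:ℝ) < 1 + 2*r := by linarith
  have hαp : (0:ℝ) < α := by linarith
  have hβ0 : (0:ℝ) < β := by linarith
  have ha : (0:ℝ) < (1 + r/6) * s := by positivity
  have hden2 : ((0:ℝ)) < (1 + 2*r) * r * s^2 := by positivity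
  have hden4 : ((0:ℝ)) < α^2 * r * s^2 := by positivity
  have hi : ∀ t ∈ Set.Icc ((1 + r/6) * s) (α * (1 + r/6) * s),
      0 ≤ hpiece s r α γ β t ∧ hpiece s r α γ β t ≤ 2 * (1 + r/6) * γ / t := by
    intro t ht
    have ht0 : (0:ℝ) < t := lt_of_lt_of_le ha ht.1
    have htb : t ≤ α * (1 + r/6) * s := ht.2
    unfold hpiece
    split_ifs with hc1 hc2 hc3
    · exact ⟨le_rfl, by positivity⟩
    · push_neg at hc1
      constructor
      · apply div_nonneg _ hden2.le
        exact mul_nonneg (mul_nonneg (by positivity) hβ0.le) (by linarith)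
      · rw [div_le_div_iff₀ hden2 ht0]
        have k1 : (t - (1 + 11*r/6) * s) * t ≤ (r*s/6) * ((1 + 2*r) * s) :=
          mul_le_mul (by nlinarith) hc2 ht0.le (by positivity)
        have k0 : (0:ℝ) ≤ (t - (1 + 11*r/6) * s) * t :=
          mul_nonneg (by linarith) ht0.le
        have k2 : 6*γ*β * ((t - (1 + 11*r/6) * s) * t) ≤
            6*γ*2 * ((r*s/6) * ((1 + 2*r) * s)) :=
          mul_le_mul (by nlinarith) k1 k0 (by positivity)
        nlinarith [k2, mul_pos (mul_pos (mul_pos hγ h2r) hr) (mul_pos hs hs)]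
    · constructor
      · exact div_nonneg (by nlinarith) ht0.le
      · rw [div_le_div_iff₀ ht0 ht0]
        nlinarith [mul_le_mul_of_nonneg_right (show β ≤ 2*(1 + r/6) by linarith)
          (le_of_lt (mul_pos hγ ht0))]
    · push_neg at hc1 hc2 hc3
      constructor
      · apply div_nonneg _ hden4.le
        exact mul_nonneg (mul_nonneg (by positivity) hβ0.le) (by linarith)
      · rw [div_le_div_iff₀ hden4 ht0]
        have k1 : (α * (1 + r/6) * s - t) * t ≤ (α*r*s/6) * (α * (1 + r/6) * s) :=
          mul_le_mul (by nlinarith) htb ht0.le (by positivity)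
        have k0 : (0:ℝ) ≤ (α * (1 + r/6) * s - t) * t :=
          mul_nonneg (by linarith) ht0.le
        have k2 : 6*γ*β * ((α * (1 + r/6) * s - t) * t) ≤
            6*γ*2 * ((α*r*s/6) * (α * (1 + r/6) * s)) :=
          mul_le_mul (by nlinarith) k1 k0 (by positivity)
        nlinarith [k2]
  refine ⟨hi, ?_⟩
  intro g hgpos hgderiv hga t ht
  have ht0 : (0:ℝ) < t := lt_of_lt_of_le ha ht.1
  have hab : (1 + r/6) * s ≤ α * (1 + r/6) * s := by nlinarith
  have hmemA : (1 + r/6) * s ∈ Set.Icc ((1 + r/6) * s) (α * (1 + r/6) * s) := ⟨le_rfl, hab⟩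
  have hmemB : α * (1 + r/6) * s ∈ Set.Icc ((1 + r/6) * s) (α * (1 + r/6) * s) := ⟨hab, le_rfl⟩
  have hH : ∀ u ∈ Set.Icc ((1 + r/6) * s) (α * (1 + r/6) * s),
      HasDerivAt (Hpiece s r α γ β) (hpiece s r α γ β u) u :=
    fun u hu => Hpiece_hasDerivAt hs hr hα hu
  -- β times the denominator equals log α
  have hlog : Real.log (1 + 2*r) < Real.log α := Real.log_lt_log h2r hα
  have hD2 : (0:ℝ) < r * (1 + r) / (6 * (1 + 2*r)) := by positivity
  have hDpos : 0 < Real.log α - Real.log (1 + 2*r) + r * (1 + r) / (6 * (1 + 2*r)) := by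
    linarith
  have hβD : β * (Real.log α - Real.log (1 + 2*r) + r * (1 + r) / (6 * (1 + 2*r))) =
      Real.log α := by
    rw [hβ, div_mul_cancel₀ _ hDpos.ne']
  -- monotonicity of Hpiece
  have hcont : ContinuousOn (Hpiece s r α γ β)
      (Set.Icc ((1 + r/6) * s) (α * (1 + r/6) * s)) :=
    fun u hu => (hH u hu).continuousAt.continuousWithinAt
  have hmono : MonotoneOn (Hpiece s r α γ β)
      (Set.Icc ((1 + r/6) * s) (α * (1 + r/6) * s)) := by
    apply monotoneOn_of_deriv_nonneg (convex_Icc _ _) hcont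
    · intro x hx
      rw [interior_Icc] at hx
      exact (hH x (Set.Ioo_subset_Icc_self hx)).differentiableAt.differentiableWithinAt
    · intro x hx
      rw [interior_Icc] at hx
      rw [(hH x (Set.Ioo_subset_Icc_self hx)).deriv]
      exact (hi x (Set.Ioo_subset_Icc_self hx)).1
  -- g(u) e^{-H(u)} is constant
  have hφc : ∀ u ∈ Set.Icc ((1 + r/6) * s) (α * (1 + r/6) * s),
      g u * Real.exp (-(Hpiece s r α γ β u)) =
        g ((1 + r/6) * s) * Real.exp (-(Hpiece s r α γ β ((1 + r/6) * s))) := by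
    apply constant_of_has_deriv_right_zero
    · intro u hu
      exact ((hgderiv u hu).mul ((hH u hu).neg.exp)).continuousAt.continuousWithinAt
    · intro u hu
      have hu' : u ∈ Set.Icc ((1 + r/6) * s) (α * (1 + r/6) * s) := Set.Ico_subset_Icc_self hu
      have h := (hgderiv u hu').mul ((hH u hu').neg.exp)
      have h0 : HasDerivAt (fun y => g y * Real.exp (-(Hpiece s r α γ β y))) 0 u := by
        refine h.congr_deriv ?_; ring
      exact h0.hasDerivWithinAt
  have hHa : Hpiece s r α γ β ((1 + r/6) * s) = 0 := Hpiece_left hs hr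
  have hHb : Hpiece s r α γ β (α * (1 + r/6) * s) = γ * Real.log α :=
    Hpiece_right hs hr hα hβD
  have key : g t = ((1 + r/6) * s) ^ γ * Real.exp (Hpiece s r α γ β t) := by
    have h := hφc t ht
    rw [hHa, hga] at h
    simp only [neg_zero, Real.exp_zero, mul_one] at h
    calc g t = g t * (Real.exp (-(Hpiece s r α γ β t)) * Real.exp (Hpiece s r α γ β t)) := by
          rw [← Real.exp_add, neg_add_cancel, Real.exp_zero, mul_one]
      _ = (g t * Real.exp (-(Hpiece s r α γ β t))) * Real.exp (Hpiece s r α γ β t) := by ring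
      _ = ((1 + r/6) * s) ^ γ * Real.exp (Hpiece s r α γ β t) := by rw [h]
  have hH0 : 0 ≤ Hpiece s r α γ β t := by
    have := hmono hmemA ht ht.1
    rwa [hHa] at this
  have hHub : Hpiece s r α γ β t ≤ γ * Real.log α := by
    have := hmono ht hmemB ht.2
    rwa [hHb] at this
  have hapow : (0:ℝ) < ((1 + r/6) * s) ^ γ := Real.rpow_pos_of_pos ha γ
  constructor
  · -- lower bound
    have hta : t ≤ α * ((1 + r/6) * s) := by rw [← mul_assoc]; exact ht.2
    have e1 : α ^ (-γ) * t ^ γ ≤ α ^ (-γ) * (α * ((1 + r/6) * s)) ^ γ := by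
      apply mul_le_mul_of_nonneg_left (Real.rpow_le_rpow ht0.le hta hγ.le)
        (Real.rpow_nonneg hαp.le _)
    have e2 : α ^ (-γ) * (α * ((1 + r/6) * s)) ^ γ = ((1 + r/6) * s) ^ γ := by
      rw [Real.mul_rpow hαp.le ha.le, ← mul_assoc, ← Real.rpow_add hαp,
        neg_add_cancel, Real.rpow_zero, one_mul]
    have e3 : ((1 + r/6) * s) ^ γ ≤ g t := by
      rw [key]
      have := Real.one_le_exp hH0
      nlinarith
    linarith [e1.trans_eq e2]
  · -- upper bound
    have e4 : Real.exp (Hpiece s r α γ β t) ≤ α ^ γ := by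
      rw [Real.rpow_def_of_pos hαp, mul_comm]
      exact Real.exp_le_exp.2 hHub
    calc g t = ((1 + r/6) * s) ^ γ * Real.exp (Hpiece s r α γ β t) := key
      _ ≤ ((1 + r/6) * s) ^ γ * α ^ γ := mul_le_mul_of_nonneg_left e4 hapow.le
      _ ≤ t ^ γ * α ^ γ := mul_le_mul_of_nonneg_right
          (Real.rpow_le_rpow ha.le ht.1 hγ.le) (Real.rpow_nonneg hαp.le _)
      _ = α ^ γ * t ^ γ := mul_comm _ _
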